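/- Under the expected signed propagation dynamics (C dividing N, equal class sizes, p, q > 0, X with rows u_{y_i}, h̄_c^{(K)} = (C/N) Σ_{i : y_i = c} (P̄^K X)_i), if the number of classes satisfies C > 2, then the ratio r := (p+q)/(p+(C−1)q) satisfies 0 < r < 1, and consequently for any two classes a, b the distance of the class means ‖h̄_a^{(K)} − h̄_b^{(K)}‖ = r^K ‖u_a − u_b‖ decreases exponentially and tends to 0 as K → ∞; i.e., signed message passing suffers from oversmoothing in the multi-class case. -/

import Mathlib

theorem stmt_4 (C N f : ℕ) (hC : 2 ≤ C) (hN : 0 < N) (hdvd : C ∣ N)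
    (hC2 : 2 < C)
    (y : Fin N → Fin C)
    (hclass : ∀ c : Fin C,
      (Finset.univ.filter (fun i => y i = c)).card = N / C)
    (p q : ℝ) (hp : 0 < p) (hq : 0 < q)
    (u : Fin C → EuclideanSpace ℝ (Fin f))
    (P : Matrix (Fin N) (Fin N) ℝ)
    (hP : ∀ i j, P i j =
      if y i = y j then ((C : ℝ) / (N * (p + ((C : ℝ) - 1) * q))) * p
      else -(((C : ℝ) / (N * (p + ((C : ℝ) - 1) * q))) * q))
    (X : Matrix (Fin N) (Fin f) ℝ)
    (hX : ∀ i j, X i j = u (y i) j)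
    (hbar : Fin C → ℕ → EuclideanSpace ℝ (Fin f))
    (hhbar : ∀ (c : Fin C) (K : ℕ) (j : Fin f),
      hbar c K j = ((C : ℝ) / N) *
        ∑ i ∈ Finset.univ.filter (fun i => y i = c), (P ^ K * X) i j) :
    0 < (p + q) / (p + ((C : ℝ) - 1) * q) ∧
    (p + q) / (p + ((C : ℝ) - 1) * q) < 1 ∧
    ∀ a b : Fin C,
      (∀ K : ℕ, ‖hbar a K - hbar b K‖ =
        ((p + q) / (p + ((C : ℝ) - 1) * q)) ^ K * ‖u a - u b‖) ∧
      Filter.Tendsto (fun K : ℕ => ‖hbar a K - hbar b K‖)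
        Filter.atTop (nhds 0) := by
  have hCR : (2 : ℝ) < (C : ℝ) := by exact_mod_cast hC2
  have hNR : (0 : ℝ) < (N : ℝ) := by exact_mod_cast hN
  set s : ℝ := p + ((C : ℝ) - 1) * q with hs_def
  have hs : 0 < s := by
    have : (0:ℝ) < ((C:ℝ) - 1) * q := by nlinarith
    linarith
  set r : ℝ := (p + q) / s with hr_def
  have hr0 : 0 < r := div_pos (by linarith) hs
  have hr1 : r < 1 := by
    rw [hr_def, div_lt_one hs]
    nlinarith
  have hC0 : (C : ℝ) ≠ 0 := by positivity
  have hN0 : (N : ℝ) ≠ 0 := ne_of_gt hNR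
  have hncast : ((N / C : ℕ) : ℝ) = (N : ℝ) / (C : ℝ) := by
    rw [Nat.cast_div hdvd hC0]
  -- key row-sum lemma
  have key : ∀ (i : Fin N) (v : Fin C → ℝ),
      ∑ k, P i k * v (y k) = r * v (y i) - (q / s) * ∑ c, v c := by
    intro i v
    have h1 : ∑ k, P i k * v (y k)
        = ∑ c : Fin C, ∑ k ∈ Finset.univ.filter (fun k => y k = c),
            P i k * v (y k) :=
      (Finset.sum_fiberwise _ _ _).symm
    have h2 : ∀ c : Fin C,
        ∑ k ∈ Finset.univ.filter (fun k => y k = c), P i k * v (y k)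
        = ((N : ℝ) / C) *
          ((if y i = c then ((C : ℝ) / (N * s)) * p
            else -(((C : ℝ) / (N * s)) * q)) * v c) := by
      intro c
      have step : ∀ k ∈ Finset.univ.filter (fun k => y k = c),
          P i k * v (y k)
          = (if y i = c then ((C : ℝ) / (N * s)) * p
             else -(((C : ℝ) / (N * s)) * q)) * v c := by
        intro k hk
        simp only [Finset.mem_filter, Finset.mem_univ, true_and] at hk
        rw [hP, hk]
      rw [Finset.sum_congr rfl step, Finset.sum_const, hclass c,
        nsmul_eq_mul, hncast]
    have hna : (N : ℝ) / C * ((C : ℝ) / (N * s)) = 1 / s := by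
      field_simp
    rw [h1, Finset.sum_congr rfl (fun c _ => h2 c)]
    have h3 : ∀ c : Fin C,
        ((N : ℝ) / C) *
          ((if y i = c then ((C : ℝ) / (N * s)) * p
            else -(((C : ℝ) / (N * s)) * q)) * v c)
        = (-(q/s)) * v c + (if c = y i then (1/s) * (p + q) * v c else 0) := by
      intro c
      by_cases h : y i = c
      · rw [if_pos h, if_pos h.symm]
        have : (N : ℝ) / C * (((C : ℝ) / (N * s)) * p * v c)
            = ((N : ℝ) / C * ((C : ℝ) / (N * s))) * p * v c := by ring
        rw [this, hna]
        ring
      · rw [if_neg h, if_neg (Ne.symm h)]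
        have : (N : ℝ) / C * (-(((C : ℝ) / (N * s)) * q) * v c)
            = -(((N : ℝ) / C * ((C : ℝ) / (N * s))) * q * v c) := by ring
        rw [this, hna]
        ring
    rw [Finset.sum_congr rfl (fun c _ => h3 c), Finset.sum_add_distrib,
      Finset.sum_ite_eq' Finset.univ (y i) (fun c => (1/s) * (p + q) * v c),
      if_pos (Finset.mem_univ _), ← Finset.mul_sum]
    rw [hr_def]
    ring
  -- structure of P^K * X
  have main : ∀ K : ℕ, ∃ β : ℝ, ∀ (i : Fin N) (j : Fin f),
      (P ^ K * X) i j = r ^ K * u (y i) j + β * ∑ c, u c j := by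
    intro K
    induction K with
    | zero =>
      exact ⟨0, fun i j => by simp [Matrix.one_mul, hX i j]⟩
    | succ K ih =>
      obtain ⟨β, hβ⟩ := ih
      refine ⟨r * β - (q / s) * (r ^ K + β * C), fun i j => ?_⟩
      have hpow : P ^ (K + 1) * X = P * (P ^ K * X) := by
        rw [pow_succ', Matrix.mul_assoc]
      rw [hpow, Matrix.mul_apply]
      have : ∀ k : Fin N, P i k * (P ^ K * X) k j
          = P i k * (r ^ K * u (y k) j + β * ∑ c, u c j) := by
        intro k; rw [hβ]
      rw [Finset.sum_congr rfl (fun k _ => this k),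
        key i (fun c => r ^ K * u c j + β * ∑ c, u c j)]
      have hsum : ∑ c : Fin C, (r ^ K * u c j + β * ∑ c', u c' j)
          = r ^ K * ∑ c, u c j + β * C * ∑ c, u c j := by
        rw [Finset.sum_add_distrib, ← Finset.mul_sum, Finset.sum_const,
          Finset.card_univ, Fintype.card_fin, nsmul_eq_mul]
        ring
      rw [hsum, pow_succ]
      ring
  -- class means
  have hbar_eq : ∀ (c : Fin C) (K : ℕ) (β : ℝ),
      (∀ (i : Fin N) (j : Fin f),
        (P ^ K * X) i j = r ^ K * u (y i) j + β * ∑ c', u c' j) →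
      ∀ j : Fin f, hbar c K j = r ^ K * u c j + β * ∑ c', u c' j := by
    intro c K β hβ j
    rw [hhbar c K j]
    have : ∑ i ∈ Finset.univ.filter (fun i => y i = c), (P ^ K * X) i j
        = ((N : ℝ) / C) * (r ^ K * u c j + β * ∑ c', u c' j) := by
      rw [Finset.sum_congr rfl (fun i hi => ?_), Finset.sum_const,
        hclass c, nsmul_eq_mul, hncast]
      simp only [Finset.mem_filter, Finset.mem_univ, true_and] at hi
      rw [hβ i j, hi]
    rw [this]
    field_simp
  refine ⟨hr0, hr1, fun a b => ?_⟩
  have hnorm : ∀ K : ℕ, ‖hbar a K - hbar b K‖ = r ^ K * ‖u a - u b‖ := by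
    intro K
    obtain ⟨β, hβ⟩ := main K
    have hdiff : hbar a K - hbar b K = (r ^ K) • (u a - u b) := by
      ext j
      have ha := hbar_eq a K β hβ j
      have hb := hbar_eq b K β hβ j
      simp only [PiLp.sub_apply, PiLp.smul_apply]
      rw [ha, hb, smul_eq_mul]
      ring
    rw [hdiff, norm_smul, Real.norm_eq_abs, abs_of_nonneg (by positivity)]
  refine ⟨hnorm, ?_⟩
  have : Filter.Tendsto (fun K : ℕ => r ^ K * ‖u a - u b‖)
      Filter.atTop (nhds 0) := by
    have h := tendsto_pow_atTop_nhds_zero_of_lt_one (le_of_lt hr0) hr1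
    simpa using h.mul_const ‖u a - u b‖
  exact this.congr (fun K => (hnorm K).symm)
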